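/- arXiv:math/0607730 — 3 statements merged into one kernel-verified Lean document; each statement's English description precedes it below -/
import Mathlib

section
/- Let φ be an Orlicz function taking only finite values, satisfying the Δ₂-condition at zero, and such that ∑_{n=n₁}^∞ φ(1/n) < ∞ for some n₁ ∈ ℕ. Then for every ε > 0 there exists δ > 0 such that for all x ∈ ces_φ with ‖x‖_φ ≥ ε one has ρ_φ(x) > δ. -/
open scoped ENNReal
open Filter

/-- An Orlicz function: `φ : ℝ → [0,∞]` even, convex, left continuous on `ℝ₊`,
continuous at zero, with `φ 0 = 0` and `φ u → ∞` as `u → ∞`. -/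
structure OrliczFunction where
  toFun : ℝ → ℝ≥0∞
  even' : ∀ u : ℝ, toFun (-u) = toFun u
  convex' : ∀ u v t : ℝ, 0 ≤ t → t ≤ 1 →
    toFun (t * u + (1 - t) * v) ≤ ENNReal.ofReal t * toFun u + ENNReal.ofReal (1 - t) * toFun v
  map_zero' : toFun 0 = 0
  leftContinuous' : ∀ t : ℝ, 0 < t → Tendsto toFun (nhdsWithin t (Set.Iio t)) (nhds (toFun t))
  continuousAtZero' : Tendsto toFun (nhds 0) (nhds 0)
  tendsto_top' : Tendsto toFun atTop (nhds ⊤)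

/-- The Cesàro mean `σx(n) = (1/n) ∑_{j=1}^n |x j|` (with `0`-based indexing). -/
noncomputable def cesaroMean (x : ℕ → ℝ) (n : ℕ) : ℝ :=
  (∑ j ∈ Finset.range (n + 1), |x j|) / (n + 1)

/-- The modular `ρ_φ(x) = ∑_i φ(σx(i))`. -/
noncomputable def rho (φ : OrliczFunction) (x : ℕ → ℝ) : ℝ≥0∞ :=
  ∑' n : ℕ, φ.toFun (cesaroMean x n)

/-- The Cesàro–Orlicz sequence space `ces_φ`. -/
def cesOrlicz (φ : OrliczFunction) : Set (ℕ → ℝ) :=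
  {x | ∃ lam : ℝ, 0 < lam ∧ rho φ (fun i => lam * x i) < ⊤}

/-- The Luxemburg norm `‖x‖_φ = inf {λ > 0 : ρ_φ(x/λ) ≤ 1}`. -/
noncomputable def luxNorm (φ : OrliczFunction) (x : ℕ → ℝ) : ℝ :=
  sInf {lam : ℝ | 0 < lam ∧ rho φ (fun i => x i / lam) ≤ 1}

/-- The subspace `A_φ` of `ces_φ`. -/
def Aphi (φ : OrliczFunction) : Set (ℕ → ℝ) :=
  {x | x ∈ cesOrlicz φ ∧ ∀ k : ℝ, 0 < k → ∃ nk : ℕ,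
    ∑' n : ℕ, φ.toFun ((k / ((nk + n + 1 : ℕ) : ℝ)) * ∑ i ∈ Finset.range (nk + n + 1), |x i|) < ⊤}

/-- `∃ n₁, ∑_{n=n₁}^∞ φ(1/n) < ∞`. -/
def TailFinite (φ : OrliczFunction) : Prop :=
  ∃ n₁ : ℕ, ∑' n : ℕ, φ.toFun (((n₁ + n + 1 : ℕ) : ℝ)⁻¹) < ⊤

/-- The `Δ₂`-condition at zero. -/
def Delta2Zero (φ : OrliczFunction) : Prop :=
  ∃ K : ℝ, 0 < K ∧ ∃ a : ℝ, 0 < a ∧ 0 < φ.toFun a ∧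
    ∀ u : ℝ, 0 ≤ u → u ≤ a → φ.toFun (2 * u) ≤ ENNReal.ofReal K * φ.toFun u

/-- `φ` takes only finite values. -/
def FiniteValued (φ : OrliczFunction) : Prop := ∀ u : ℝ, φ.toFun u ≠ ⊤

lemma phi_mono (φ : OrliczFunction) {u v : ℝ} (hu : 0 ≤ u) (huv : u ≤ v) :
    φ.toFun u ≤ φ.toFun v := by
  rcases eq_or_lt_of_le (hu.trans huv) with hv | hv
  · have h0 : u = 0 := le_antisymm (huv.trans hv.symm.le) hu
    rw [h0, ← hv]
  · have ht0 : 0 ≤ u / v := div_nonneg hu hv.le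
    have ht1 : u / v ≤ 1 := (div_le_one hv).2 huv
    have h := φ.convex' v 0 (u / v) ht0 ht1
    rw [mul_zero, add_zero, div_mul_cancel₀ u hv.ne', φ.map_zero', mul_zero, add_zero] at h
    calc φ.toFun u ≤ ENNReal.ofReal (u / v) * φ.toFun v := h
      _ ≤ 1 * φ.toFun v := mul_le_mul_left (ENNReal.ofReal_le_one.2 ht1) _
      _ = φ.toFun v := one_mul _

lemma phi_pos_div (φ : OrliczFunction) {K a : ℝ} (ha : 0 < a) (hpa : 0 < φ.toFun a)
    (hΔ : ∀ u : ℝ, 0 ≤ u → u ≤ a → φ.toFun (2 * u) ≤ ENNReal.ofReal K * φ.toFun u) :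
    ∀ m : ℕ, 0 < φ.toFun (a / 2 ^ m) := by
  intro m
  induction m with
  | zero => simpa using hpa
  | succ m ih =>
    rw [pos_iff_ne_zero]
    intro h0
    have heq : (2 : ℝ) * (a / 2 ^ (m + 1)) = a / 2 ^ m := by
      rw [pow_succ]; field_simp
    have h := hΔ (a / 2 ^ (m + 1)) (by positivity)
      (div_le_self ha.le (one_le_pow₀ (by norm_num)))
    rw [heq, h0, mul_zero] at h
    exact absurd (le_antisymm h zero_le) ih.ne'

lemma delta2_iter (φ : OrliczFunction) {K a : ℝ} (hK : 0 < K) (ha : 0 < a)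
    (hΔ : ∀ u : ℝ, 0 ≤ u → u ≤ a → φ.toFun (2 * u) ≤ ENNReal.ofReal K * φ.toFun u) :
    ∀ m : ℕ, ∀ u : ℝ, 0 ≤ u → 2 ^ m * u ≤ 2 * a →
      φ.toFun (2 ^ m * u) ≤ ENNReal.ofReal (K ^ m) * φ.toFun u := by
  intro m
  induction m with
  | zero => intro u hu _; simp
  | succ m ih =>
    intro u hu h2
    have hpow : (0 : ℝ) < 2 ^ m := by positivity
    have h2m : 2 ^ m * u ≤ a := by
      have : (2 : ℝ) ^ (m + 1) = 2 * 2 ^ m := by rw [pow_succ]; ring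
      nlinarith
    have h1 : φ.toFun (2 * (2 ^ m * u)) ≤ ENNReal.ofReal K * φ.toFun (2 ^ m * u) :=
      hΔ _ (by positivity) h2m
    have h2' : φ.toFun (2 ^ m * u) ≤ ENNReal.ofReal (K ^ m) * φ.toFun u :=
      ih u hu (by nlinarith)
    calc φ.toFun (2 ^ (m + 1) * u) = φ.toFun (2 * (2 ^ m * u)) := by congr 1; ring
      _ ≤ ENNReal.ofReal K * φ.toFun (2 ^ m * u) := h1
      _ ≤ ENNReal.ofReal K * (ENNReal.ofReal (K ^ m) * φ.toFun u) := mul_le_mul_right h2' _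
      _ = ENNReal.ofReal (K ^ (m + 1)) * φ.toFun u := by
          rw [← mul_assoc, ← ENNReal.ofReal_mul hK.le, pow_succ]
          ring_nf

lemma cesaroMean_nonneg (x : ℕ → ℝ) (n : ℕ) : 0 ≤ cesaroMean x n := by
  unfold cesaroMean
  positivity

lemma cesaroMean_smul {c : ℝ} (hc : 0 ≤ c) (x : ℕ → ℝ) (n : ℕ) :
    cesaroMean (fun i => c * x i) n = c * cesaroMean x n := by
  unfold cesaroMean
  simp only [abs_mul, abs_of_nonneg hc, ← Finset.mul_sum, mul_div_assoc]

/-- if `φ ∈ Δ₂(0)` then for any `ε > 0` there is `δ > 0` with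
`ρ_φ(x) > δ` whenever `‖x‖_φ ≥ ε`. -/
theorem stmt_13 (φ : OrliczFunction) (hfin : FiniteValued φ) (hδ : Delta2Zero φ)
    (htail : TailFinite φ) :
    ∀ ε : ℝ, 0 < ε → ∃ δ : ℝ, 0 < δ ∧ ∀ x ∈ cesOrlicz φ,
      ε ≤ luxNorm φ x → ENNReal.ofReal δ < rho φ x := by
  obtain ⟨K, hK, a, ha, hpa, hΔ⟩ := hδ
  set M := max K 1 with hMdef
  have hM1 : (1 : ℝ) ≤ M := le_max_right _ _
  have hM : (0 : ℝ) < M := lt_of_lt_of_le one_pos hM1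
  have hΔM : ∀ u : ℝ, 0 ≤ u → u ≤ a → φ.toFun (2 * u) ≤ ENNReal.ofReal M * φ.toFun u :=
    fun u h1 h2 => (hΔ u h1 h2).trans
      (mul_le_mul_left (ENNReal.ofReal_le_ofReal (le_max_left _ _)) _)
  intro ε hε
  obtain ⟨m, hm⟩ : ∃ m : ℕ, (1 / 2 : ℝ) ^ m < ε :=
    exists_pow_lt_of_lt_one hε (by norm_num)
  set c := a / 2 ^ m with hcdef
  have hc : 0 < c := by positivity
  have hφc : 0 < φ.toFun c := phi_pos_div φ ha hpa hΔM m
  have hφcfin : φ.toFun c ≠ ⊤ := hfin c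
  set φcr := (φ.toFun c).toReal with hφcrdef
  have hφcr : 0 < φcr := ENNReal.toReal_pos hφc.ne' hφcfin
  have hδpos : 0 < min (φcr / 2) (1 / (2 * M ^ m)) :=
    lt_min (by positivity) (by positivity)
  refine ⟨min (φcr / 2) (1 / (2 * M ^ m)), hδpos, ?_⟩
  intro x _ hxnorm
  by_contra hcon
  push_neg at hcon
  set δ := min (φcr / 2) (1 / (2 * M ^ m)) with hδdef
  -- each term of the modular is ≤ δ
  have hterm : ∀ n, φ.toFun (cesaroMean x n) ≤ ENNReal.ofReal δ :=
    fun n => (ENNReal.le_tsum n).trans hcon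
  have hδltφc : ENNReal.ofReal δ < φ.toFun c := by
    calc ENNReal.ofReal δ ≤ ENNReal.ofReal (φcr / 2) :=
          ENNReal.ofReal_le_ofReal (min_le_left _ _)
      _ < ENNReal.ofReal φcr := by
          rw [ENNReal.ofReal_lt_ofReal_iff hφcr]; linarith
      _ = φ.toFun c := ENNReal.ofReal_toReal hφcfin
  have hσ : ∀ n, cesaroMean x n ≤ c := by
    intro n
    by_contra h
    push_neg at h
    exact absurd ((phi_mono φ hc.le h.le).trans (hterm n)) hδltφc.not_ge
  -- scale by 2^m
  have hscale : ∀ n, φ.toFun (2 ^ m * cesaroMean x n) ≤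
      ENNReal.ofReal (M ^ m) * φ.toFun (cesaroMean x n) := by
    intro n
    refine delta2_iter φ hM ha hΔM m _ (cesaroMean_nonneg x n) ?_
    have h1 : 2 ^ m * cesaroMean x n ≤ 2 ^ m * c :=
      mul_le_mul_of_nonneg_left (hσ n) (by positivity)
    have h2 : (2 : ℝ) ^ m * c = a := by rw [hcdef]; field_simp
    linarith
  have hrho2 : rho φ (fun i => 2 ^ m * x i) ≤ 1 := by
    have hfun : rho φ (fun i => 2 ^ m * x i) =
        ∑' n, φ.toFun (2 ^ m * cesaroMean x n) := by
      unfold rho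
      congr 1
      funext n
      rw [cesaroMean_smul (by positivity) x n]
    rw [hfun]
    calc ∑' n, φ.toFun (2 ^ m * cesaroMean x n)
        ≤ ∑' n, ENNReal.ofReal (M ^ m) * φ.toFun (cesaroMean x n) :=
          ENNReal.tsum_le_tsum hscale
      _ = ENNReal.ofReal (M ^ m) * rho φ x := ENNReal.tsum_mul_left
      _ ≤ ENNReal.ofReal (M ^ m) * ENNReal.ofReal δ := mul_le_mul_right hcon _
      _ = ENNReal.ofReal (M ^ m * δ) := (ENNReal.ofReal_mul (by positivity)).symm
      _ ≤ ENNReal.ofReal 1 := by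
          apply ENNReal.ofReal_le_ofReal
          have hMm : (0 : ℝ) < M ^ m := by positivity
          have hδle : δ * (2 * M ^ m) ≤ 1 :=
            (le_div_iff₀ (by positivity)).1 (min_le_right (φcr / 2) (1 / (2 * M ^ m)))
          nlinarith [hδpos.le]
      _ ≤ 1 := by simp
  -- hence the norm is at most (1/2)^m < ε
  have hmem : (1 / 2 : ℝ) ^ m ∈ {lam : ℝ | 0 < lam ∧ rho φ (fun i => x i / lam) ≤ 1} := by
    constructor
    · positivity
    · have : (fun i => x i / (1 / 2 : ℝ) ^ m) = fun i => 2 ^ m * x i := by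
        funext i
        rw [div_pow, one_pow, div_div_eq_mul_div, div_one, mul_comm]
      rw [this]
      exact hrho2
  have hlux : luxNorm φ x ≤ (1 / 2 : ℝ) ^ m :=
    csInf_le ⟨0, fun y hy => hy.1.le⟩ hmem
  linarith [hxnorm.trans hlux]
end

section
/- Let φ be an Orlicz function taking only finite values, satisfying the Δ₂-condition at zero, and such that ∑_{n=n₁}^∞ φ(1/n) < ∞ for some n₁ ∈ ℕ. Then for every sequence (x_n) of elements of ces_φ: ‖x_n‖_φ → 1 if and only if ρ_φ(x_n) → 1. -/
open scoped ENNReal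
open Filter

lemma phi_smul_le (φ : OrliczFunction) {t : ℝ} (u : ℝ) (ht0 : 0 ≤ t) (ht1 : t ≤ 1) :
    φ.toFun (t * u) ≤ ENNReal.ofReal t * φ.toFun u := by
  have h := φ.convex' u 0 t ht0 ht1
  simpa [φ.map_zero'] using h

lemma rho_smul_le (φ : OrliczFunction) {t : ℝ} (x : ℕ → ℝ) (ht0 : 0 ≤ t) (ht1 : t ≤ 1) :
    rho φ (fun i => t * x i) ≤ ENNReal.ofReal t * rho φ x := by
  unfold rho
  rw [← ENNReal.tsum_mul_left]
  refine ENNReal.tsum_le_tsum fun n => ?_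
  rw [cesaroMean_smul ht0]
  exact phi_smul_le φ _ ht0 ht1

lemma exists_mem_luxSet (φ : OrliczFunction) {x : ℕ → ℝ} (hx : x ∈ cesOrlicz φ) :
    ∃ lam : ℝ, 0 < lam ∧ rho φ (fun i => x i / lam) ≤ 1 := by
  obtain ⟨lam, hlam, hR⟩ := hx
  set R := rho φ (fun i => lam * x i) with hRdef
  set t : ℝ := min 1 (1 / (R.toReal + 1)) with htdef
  have hR0 : 0 ≤ R.toReal := ENNReal.toReal_nonneg
  have ht0 : 0 < t := lt_min one_pos (by positivity)
  have ht1 : t ≤ 1 := min_le_left _ _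
  refine ⟨(t * lam)⁻¹, by positivity, ?_⟩
  have hfun : (fun i => x i / (t * lam)⁻¹) = fun i => t * (lam * x i) := by
    funext i
    rw [div_eq_mul_inv, inv_inv]
    ring
  rw [hfun]
  calc rho φ (fun i => t * (lam * x i)) ≤ ENNReal.ofReal t * R := rho_smul_le φ _ ht0.le ht1
    _ ≤ ENNReal.ofReal (1 / (R.toReal + 1)) * ENNReal.ofReal R.toReal := by
        gcongr
        · exact min_le_right _ _
        · exact (ENNReal.ofReal_toReal hR.ne).symm.le
    _ = ENNReal.ofReal (R.toReal / (R.toReal + 1)) := by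
        rw [← ENNReal.ofReal_mul (by positivity)]; ring_nf
    _ ≤ 1 := by
        rw [← ENNReal.ofReal_one]
        exact ENNReal.ofReal_le_ofReal (by rw [div_le_one (by positivity)]; linarith)

lemma luxSet_upward (φ : OrliczFunction) {x : ℕ → ℝ} {lam mu : ℝ} (hlam : 0 < lam)
    (hmu : lam ≤ mu) (h : rho φ (fun i => x i / lam) ≤ 1) :
    rho φ (fun i => x i / mu) ≤ 1 := by
  have hmu0 : 0 < mu := hlam.trans_le hmu
  have hfun : (fun i => x i / mu) = fun i => (lam / mu) * (x i / lam) := by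
    funext i
    field_simp
  rw [hfun]
  calc rho φ (fun i => (lam / mu) * (x i / lam))
      ≤ ENNReal.ofReal (lam / mu) * rho φ (fun i => x i / lam) :=
        rho_smul_le φ _ (by positivity) ((div_le_one hmu0).2 hmu)
    _ ≤ ENNReal.ofReal (lam / mu) * 1 := by gcongr
    _ ≤ 1 := by
        rw [mul_one]
        exact ENNReal.ofReal_le_one.2 ((div_le_one hmu0).2 hmu)

lemma luxNorm_le (φ : OrliczFunction) {x : ℕ → ℝ} {lam : ℝ} (hlam : 0 < lam)
    (h : rho φ (fun i => x i / lam) ≤ 1) : luxNorm φ x ≤ lam :=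
  csInf_le ⟨0, fun _ hy => hy.1.le⟩ ⟨hlam, h⟩

lemma luxNorm_nonneg (φ : OrliczFunction) (x : ℕ → ℝ) : 0 ≤ luxNorm φ x :=
  Real.sInf_nonneg fun _ hy => hy.1.le

lemma rho_div_le_one_of_norm_lt (φ : OrliczFunction) {x : ℕ → ℝ} (hx : x ∈ cesOrlicz φ)
    {mu : ℝ} (h : luxNorm φ x < mu) : rho φ (fun i => x i / mu) ≤ 1 := by
  obtain ⟨lam, hlam, hlamle⟩ := exists_mem_luxSet φ hx
  have hne : Set.Nonempty {l : ℝ | 0 < l ∧ rho φ (fun i => x i / l) ≤ 1} := ⟨lam, hlam, hlamle⟩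
  obtain ⟨c, hc, hclt⟩ := exists_lt_of_csInf_lt hne h
  exact luxSet_upward φ hc.1 hclt.le hc.2

lemma rho_le_of_norm_lt (φ : OrliczFunction) {x : ℕ → ℝ} (hx : x ∈ cesOrlicz φ)
    {c : ℝ} (hc : luxNorm φ x < c) (hc1 : c ≤ 1) : rho φ x ≤ ENNReal.ofReal c := by
  obtain ⟨lam, hlam0, hlamle⟩ := exists_mem_luxSet φ hx
  have hne : Set.Nonempty {l : ℝ | 0 < l ∧ rho φ (fun i => x i / l) ≤ 1} := ⟨lam, hlam0, hlamle⟩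
  obtain ⟨l, hl, hllt⟩ := exists_lt_of_csInf_lt hne hc
  have hfun : x = fun i => l * (x i / l) := by
    funext i
    rw [mul_comm, div_mul_cancel₀ _ hl.1.ne']
  calc rho φ x = rho φ (fun i => l * (x i / l)) := by rw [← hfun]
    _ ≤ ENNReal.ofReal l * rho φ (fun i => x i / l) :=
        rho_smul_le φ _ hl.1.le (hllt.le.trans hc1)
    _ ≤ ENNReal.ofReal l * 1 := by gcongr; exact hl.2
    _ ≤ ENNReal.ofReal c := by rw [mul_one]; exact ENNReal.ofReal_le_ofReal hllt.le

lemma phi_scale_le (φ : OrliczFunction) {b m : ℝ} (hm0 : 0 ≤ m)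
    (hΔ : ∀ u, 0 ≤ u → u ≤ b → φ.toFun (2 * u) ≤ ENNReal.ofReal m * φ.toFun u)
    {s u : ℝ} (hs1 : 1 ≤ s) (hs2 : s ≤ 2) (hu0 : 0 ≤ u) (hub : u ≤ b) :
    φ.toFun (s * u) ≤ ENNReal.ofReal ((2 - s) + (s - 1) * m) * φ.toFun u := by
  have hc := φ.convex' u (2 * u) (2 - s) (by linarith) (by linarith)
  rw [show (2 - s) * u + (1 - (2 - s)) * (2 * u) = s * u by ring,
    show (1 - (2 - s)) = s - 1 by ring] at hc
  calc φ.toFun (s * u)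
      ≤ ENNReal.ofReal (2 - s) * φ.toFun u + ENNReal.ofReal (s - 1) * φ.toFun (2 * u) := hc
    _ ≤ ENNReal.ofReal (2 - s) * φ.toFun u
        + ENNReal.ofReal (s - 1) * (ENNReal.ofReal m * φ.toFun u) := by
        gcongr; exact hΔ u hu0 hub
    _ = ENNReal.ofReal ((2 - s) + (s - 1) * m) * φ.toFun u := by
        rw [ENNReal.ofReal_add (by linarith) (mul_nonneg (by linarith) hm0), add_mul,
          ← mul_assoc, ← ENNReal.ofReal_mul (by linarith)]

lemma rho_scale_le (φ : OrliczFunction) {b m : ℝ} (hm0 : 0 ≤ m)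
    (hΔ : ∀ u, 0 ≤ u → u ≤ b → φ.toFun (2 * u) ≤ ENNReal.ofReal m * φ.toFun u)
    {s : ℝ} (hs1 : 1 ≤ s) (hs2 : s ≤ 2) {x : ℕ → ℝ} (hx : ∀ n, cesaroMean x n ≤ b) :
    rho φ (fun i => s * x i) ≤ ENNReal.ofReal ((2 - s) + (s - 1) * m) * rho φ x := by
  unfold rho
  rw [← ENNReal.tsum_mul_left]
  refine ENNReal.tsum_le_tsum fun n => ?_
  rw [cesaroMean_smul (by linarith)]
  exact phi_scale_le φ hm0 hΔ hs1 hs2 (cesaroMean_nonneg x n) (hx n)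


/-- if `φ ∈ Δ₂(0)` then `‖x_n‖_φ → 1 ↔ ρ_φ(x_n) → 1`. -/
theorem stmt_15 (φ : OrliczFunction) (hfin : FiniteValued φ) (hδ : Delta2Zero φ)
    (htail : TailFinite φ) (xs : ℕ → ℕ → ℝ) (hmem : ∀ n, xs n ∈ cesOrlicz φ) :
    Tendsto (fun n => luxNorm φ (xs n)) atTop (nhds 1) ↔
      Tendsto (fun n => rho φ (xs n)) atTop (nhds 1) := by
  classical
  obtain ⟨K, hK, a, ha, hφa, hΔK⟩ := hδ
  have h1lt : ∀ᶠ u in atTop, φ.toFun u ∈ Set.Ioi (1 : ℝ≥0∞) :=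
    φ.tendsto_top'.eventually (Ioi_mem_nhds (by simp))
  obtain ⟨b₀, hb₀⟩ := eventually_atTop.1 h1lt
  set b : ℝ := max b₀ (max a 1) with hbdef
  have hab : a ≤ b := le_trans (le_max_left _ _) (le_max_right _ _)
  have hb1 : (1:ℝ) ≤ b := le_trans (le_max_right _ _) (le_max_right _ _)
  have hbgt : ∀ u, b ≤ u → 1 < φ.toFun u := fun u hu => hb₀ u ((le_max_left _ _).trans hu)
  set p : ℝ := (φ.toFun a).toReal with hpdef
  have hp : 0 < p := ENNReal.toReal_pos hφa.ne' (hfin a)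
  set r : ℝ := (φ.toFun (2*b)).toReal with hrdef
  have hr : 0 ≤ r := ENNReal.toReal_nonneg
  set m : ℝ := max 1 (max K (r/p)) with hmdef
  have hm1 : (1:ℝ) ≤ m := le_max_left _ _
  have hΔm : ∀ u, 0 ≤ u → u ≤ b → φ.toFun (2*u) ≤ ENNReal.ofReal m * φ.toFun u := by
    intro u hu hub
    by_cases hua : u ≤ a
    · calc φ.toFun (2*u) ≤ ENNReal.ofReal K * φ.toFun u := hΔK u hu hua
        _ ≤ ENNReal.ofReal m * φ.toFun u := by
            gcongr
            exact (le_max_left K _).trans (le_max_right _ _)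
    · push_neg at hua
      calc φ.toFun (2*u) ≤ φ.toFun (2*b) := phi_mono φ (by linarith) (by linarith)
        _ = ENNReal.ofReal r := (ENNReal.ofReal_toReal (hfin _)).symm
        _ = ENNReal.ofReal ((r/p) * p) := by rw [div_mul_cancel₀ _ hp.ne']
        _ = ENNReal.ofReal (r/p) * ENNReal.ofReal p := ENNReal.ofReal_mul (by positivity)
        _ = ENNReal.ofReal (r/p) * φ.toFun a := by rw [hpdef, ENNReal.ofReal_toReal (hfin a)]
        _ ≤ ENNReal.ofReal (r/p) * φ.toFun u := by gcongr; exact phi_mono φ ha.le hua.le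
        _ ≤ ENNReal.ofReal m * φ.toFun u := by
            gcongr
            exact (le_max_right K _).trans (le_max_right _ _)
  have hces : ∀ y : ℕ → ℝ, rho φ y ≤ 1 → ∀ n, cesaroMean y n ≤ b := by
    intro y hy n
    by_contra hcon
    push_neg at hcon
    have h1 : 1 < φ.toFun (cesaroMean y n) := hbgt _ hcon.le
    have h2 : φ.toFun (cesaroMean y n) ≤ 1 := le_trans (ENNReal.le_tsum n) hy
    exact absurd (h1.trans_le h2) (lt_irrefl _)
  have claimU : ∀ x ∈ cesOrlicz φ, ∀ s : ℝ, 1 ≤ s → s ≤ 2 → luxNorm φ x < s →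
      rho φ x ≤ ENNReal.ofReal ((2 - s) + (s - 1) * m) := by
    intro x hx s hs1 hs2 hlt
    have hd : rho φ (fun i => x i / s) ≤ 1 := rho_div_le_one_of_norm_lt φ hx hlt
    have hs0 : (0:ℝ) < s := by linarith
    have hces' : ∀ n, cesaroMean (fun i => x i / s) n ≤ b := hces _ hd
    have hfun : x = fun i => s * (x i / s) := by
      funext i; rw [mul_comm, div_mul_cancel₀ _ hs0.ne']
    calc rho φ x = rho φ (fun i => s * (x i / s)) := by rw [← hfun]
      _ ≤ ENNReal.ofReal ((2 - s) + (s - 1) * m) * rho φ (fun i => x i / s) :=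
          rho_scale_le φ (by linarith) hΔm hs1 hs2 hces'
      _ ≤ ENNReal.ofReal ((2 - s) + (s - 1) * m) * 1 := by gcongr
      _ = _ := mul_one _
  have claimL : ∀ x : ℕ → ℝ, ∀ d : ℝ, 0 < d → d ≤ 1/2 → rho φ x ≤ 1 →
      ENNReal.ofReal ((2 - 1/(1-d)) + (1/(1-d) - 1) * m) * rho φ x ≤ 1 →
      luxNorm φ x ≤ 1 - d := by
    intro x d hd0 hd2 hρ1 hkey
    have hd1 : (0:ℝ) < 1 - d := by linarith
    have hs1 : 1 ≤ 1/(1-d) := by rw [le_div_iff₀ hd1]; linarith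
    have hs2 : 1/(1-d) ≤ 2 := by rw [div_le_iff₀ hd1]; linarith
    have hces' := hces x hρ1
    have hfun : (fun i => x i / (1-d)) = fun i => (1/(1-d)) * x i := by
      funext i; field_simp
    have hkey2 : rho φ (fun i => x i / (1-d)) ≤ 1 := by
      rw [hfun]
      calc rho φ (fun i => (1/(1-d)) * x i)
          ≤ ENNReal.ofReal ((2 - 1/(1-d)) + (1/(1-d) - 1) * m) * rho φ x :=
            rho_scale_le φ (by linarith) hΔm hs1 hs2 hces'
        _ ≤ 1 := hkey
    exact luxNorm_le φ hd1 hkey2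
  constructor
  · intro h
    rw [ENNReal.tendsto_nhds ENNReal.one_ne_top]
    intro ε hε
    set ε' : ℝ≥0∞ := min ε 1 with hε'def
    have hε'0 : 0 < ε' := lt_min hε zero_lt_one
    have hε'top : ε' ≠ ⊤ := ((min_le_right ε 1).trans_lt ENNReal.one_lt_top).ne
    set e : ℝ := ε'.toReal with hedef
    have he0 : 0 < e := ENNReal.toReal_pos hε'0.ne' hε'top
    have he1 : e ≤ 1 := by
      have h1 : ε' ≤ 1 := min_le_right _ _
      calc e ≤ (1:ℝ≥0∞).toReal := ENNReal.toReal_mono (by simp) h1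
        _ = 1 := by simp
    have hm0 : (0:ℝ) < m := lt_of_lt_of_le one_pos hm1
    set d : ℝ := e / (2*m) with hddef
    have hd0 : 0 < d := by positivity
    have hd2 : d ≤ 1/2 := by
      rw [hddef, div_le_div_iff₀ (by positivity) (by norm_num)]
      nlinarith
    have hdm : d * m = e/2 := by rw [hddef]; field_simp
    have evU' : ∀ᶠ n in atTop, rho φ (xs n) ≤ 1 + ε := by
      filter_upwards [h.eventually (Iio_mem_nhds (show (1:ℝ) < 1 + d by linarith))] with n hn
      calc rho φ (xs n) ≤ ENNReal.ofReal ((2-(1+d)) + ((1+d)-1)*m) :=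
            claimU (xs n) (hmem n) (1+d) (by linarith) (by linarith) hn
        _ ≤ ENNReal.ofReal (1 + e) := ENNReal.ofReal_le_ofReal (by nlinarith)
        _ = 1 + ε' := by
            rw [ENNReal.ofReal_add (by norm_num) he0.le, ENNReal.ofReal_one,
              hedef, ENNReal.ofReal_toReal hε'top]
        _ ≤ 1 + ε := add_le_add le_rfl (min_le_left _ _)
    have evL' : ∀ᶠ n in atTop, 1 - ε ≤ rho φ (xs n) := by
      filter_upwards [h.eventually (Ioi_mem_nhds (show 1 - d < (1:ℝ) by linarith))] with n hn
      have hle : (1:ℝ≥0∞) - ε ≤ ENNReal.ofReal (1 - e) := by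
        rw [ENNReal.ofReal_sub _ he0.le, ENNReal.ofReal_one, hedef,
          ENNReal.ofReal_toReal hε'top]
        exact tsub_le_tsub_left (min_le_left _ _) _
      refine hle.trans ?_
      by_contra hcon
      push_neg at hcon
      have hρ1 : rho φ (xs n) ≤ 1 :=
        le_trans hcon.le (ENNReal.ofReal_le_one.2 (by linarith))
      have hd1 : (0:ℝ) < 1 - d := by linarith
      have hsle : (1/(1-d) - 1) ≤ 2*d := by
        have heq : 1/(1-d) - 1 = d/(1-d) := by field_simp; ring
        rw [heq, div_le_iff₀ hd1]
        nlinarith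
      have hcs : (2 - 1/(1-d)) + (1/(1-d) - 1) * m ≤ 1 + e := by
        have h1s : 1 ≤ 1/(1-d) := by rw [le_div_iff₀ hd1]; linarith
        nlinarith [mul_le_mul_of_nonneg_right hsle hm0.le]
      have hkey : ENNReal.ofReal ((2 - 1/(1-d)) + (1/(1-d) - 1) * m) * rho φ (xs n) ≤ 1 := by
        calc ENNReal.ofReal ((2 - 1/(1-d)) + (1/(1-d) - 1) * m) * rho φ (xs n)
            ≤ ENNReal.ofReal (1+e) * ENNReal.ofReal (1-e) :=
              mul_le_mul' (ENNReal.ofReal_le_ofReal hcs) hcon.le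
          _ = ENNReal.ofReal ((1+e)*(1-e)) := (ENNReal.ofReal_mul (by linarith)).symm
          _ ≤ 1 := ENNReal.ofReal_le_one.2 (by nlinarith)
      exact absurd (claimL (xs n) d hd0 hd2 hρ1 hkey) (not_le.2 hn)
    filter_upwards [evU', evL'] with n h1 h2
    exact Set.mem_Icc.2 ⟨h2, h1⟩
  · intro h
    rw [tendsto_order]
    constructor
    · intro q hq1
      rcases lt_or_ge q 0 with hq0 | hq0
      · exact Eventually.of_forall fun n => lt_of_lt_of_le hq0 (luxNorm_nonneg φ _)
      · set c : ℝ := (1+q)/2 with hcdef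
        have hqc : q < c := by rw [hcdef]; linarith
        have hc1 : c < 1 := by rw [hcdef]; linarith
        have ev : ∀ᶠ n in atTop, ENNReal.ofReal c < rho φ (xs n) :=
          h.eventually (Ioi_mem_nhds (ENNReal.ofReal_lt_one.2 hc1))
        filter_upwards [ev] with n hn
        by_contra hcon
        push_neg at hcon
        have := rho_le_of_norm_lt φ (hmem n) (lt_of_le_of_lt hcon hqc) hc1.le
        exact absurd hn (not_lt.2 this)
    · intro q hq1
      set c : ℝ := (1+q)/2 with hcdef
      have hc1 : 1 < c := by rw [hcdef]; linarith
      have hca : c < q := by rw [hcdef]; linarith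
      have hc0 : (0:ℝ) < c := by linarith
      have ev : ∀ᶠ n in atTop, rho φ (xs n) < ENNReal.ofReal c := by
        refine h.eventually (Iio_mem_nhds ?_)
        rw [← ENNReal.ofReal_one]
        exact (ENNReal.ofReal_lt_ofReal_iff hc0).2 hc1
      filter_upwards [ev] with n hn
      have hkey : rho φ (fun i => xs n i / c) ≤ 1 := by
        have hfun : (fun i => xs n i / c) = fun i => c⁻¹ * xs n i := by
          funext i; rw [div_eq_inv_mul]
        have hcinv : c⁻¹ ≤ 1 := by
          rw [inv_eq_one_div, div_le_one hc0]; exact hc1.le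
        rw [hfun]
        calc rho φ (fun i => c⁻¹ * xs n i) ≤ ENNReal.ofReal c⁻¹ * rho φ (xs n) :=
            rho_smul_le φ _ (by positivity) hcinv
          _ ≤ ENNReal.ofReal c⁻¹ * ENNReal.ofReal c := mul_le_mul' le_rfl hn.le
          _ = ENNReal.ofReal (c⁻¹ * c) := (ENNReal.ofReal_mul (by positivity)).symm
          _ ≤ 1 := by rw [inv_mul_cancel₀ hc0.ne']; simp
      exact lt_of_le_of_lt (luxNorm_le φ hc0 hkey) hca
end

section
/- Let φ be an Orlicz function taking only finite values and such that ∑_{n=n₁}^∞ φ(1/n) < ∞ for some n₁ ∈ ℕ. Then A_φ is strictly monotone (i.e. ‖x‖_φ < ‖y‖_φ whenever x, y ∈ A_φ satisfy 0 ≤ x(i) ≤ y(i) for all i and x ≠ y) if and only if φ(u) > 0 for every u > 0. -/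
open scoped ENNReal
open Filter

namespace SMAux

variable (φ : OrliczFunction)

lemma phi_mono {s t : ℝ} (hs : 0 ≤ s) (hst : s ≤ t) : φ.toFun s ≤ φ.toFun t := by
  rcases eq_or_lt_of_le (hs.trans hst) with h | ht
  · have hs0 : s = 0 := le_antisymm (hst.trans h.symm.le) hs
    rw [hs0, ← h]
  · have h := φ.convex' t 0 (s / t) (div_nonneg hs ht.le) ((div_le_one ht).mpr hst)
    rw [mul_zero, add_zero, div_mul_cancel₀ s ht.ne', φ.map_zero', mul_zero, add_zero] at h
    calc φ.toFun s ≤ ENNReal.ofReal (s / t) * φ.toFun t := h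
      _ ≤ 1 * φ.toFun t :=
        mul_le_mul_left (ENNReal.ofReal_le_one.mpr ((div_le_one ht).mpr hst)) _
      _ = φ.toFun t := one_mul _

lemma phi_zero_le {u t : ℝ} (hu : φ.toFun u = 0) (h0 : 0 ≤ t) (htu : t ≤ u) :
    φ.toFun t = 0 :=
  le_antisymm (hu ▸ phi_mono φ h0 htu) zero_le

lemma phi_lt (hfin : FiniteValued φ) (hpos : ∀ u : ℝ, 0 < u → 0 < φ.toFun u)
    {s t : ℝ} (hs : 0 ≤ s) (hst : s < t) : φ.toFun s < φ.toFun t := by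
  have ht : 0 < t := hs.trans_lt hst
  have h := φ.convex' t 0 (s / t) (div_nonneg hs ht.le) ((div_le_one ht).mpr hst.le)
  rw [mul_zero, add_zero, div_mul_cancel₀ s ht.ne', φ.map_zero', mul_zero, add_zero] at h
  refine h.trans_lt ?_
  have : ENNReal.ofReal (s / t) * φ.toFun t < 1 * φ.toFun t := by
    rw [ENNReal.mul_lt_mul_iff_left (hpos t ht).ne' (hfin t)]
    exact ENNReal.ofReal_lt_one.mpr ((div_lt_one ht).mpr hst)
  simpa using this

lemma ces_nonneg (z : ℕ → ℝ) (n : ℕ) : 0 ≤ cesaroMean z n :=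
  div_nonneg (Finset.sum_nonneg fun _ _ => abs_nonneg _) (by positivity)

lemma ces_div (z : ℕ → ℝ) {lam : ℝ} (hl : 0 < lam) (n : ℕ) :
    cesaroMean (fun i => z i / lam) n = cesaroMean z n / lam := by
  simp only [cesaroMean, abs_div, abs_of_pos hl]
  rw [← Finset.sum_div, div_right_comm]

lemma ces_smul (z : ℕ → ℝ) {k : ℝ} (hk : 0 ≤ k) (n : ℕ) :
    cesaroMean (fun i => k * z i) n = k * cesaroMean z n := by
  simp only [cesaroMean, abs_mul, abs_of_nonneg hk]
  rw [← Finset.mul_sum, mul_div_assoc]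

lemma rho_k_lt_top (hfin : FiniteValued φ) {z : ℕ → ℝ} (hz : z ∈ Aphi φ) {k : ℝ}
    (hk : 0 < k) : rho φ (fun i => k * z i) < ⊤ := by
  obtain ⟨-, h2⟩ := hz
  obtain ⟨nk, hnk⟩ := h2 k hk
  have hrw : ∀ n : ℕ, φ.toFun ((k / ((nk + n + 1 : ℕ) : ℝ)) *
      ∑ i ∈ Finset.range (nk + n + 1), |z i|) = φ.toFun (k * cesaroMean z (n + nk)) := by
    intro n
    have e : n + nk + 1 = nk + n + 1 := by omega
    congr 1
    unfold cesaroMean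
    rw [e]
    push_cast
    ring
  rw [rho]
  have hces : ∀ n : ℕ, φ.toFun (cesaroMean (fun i => k * z i) n) =
      φ.toFun (k * cesaroMean z n) := fun n => by rw [ces_smul z hk.le n]
  simp only [hces]
  rw [← Summable.sum_add_tsum_nat_add' (f := fun n => φ.toFun (k * cesaroMean z n)) (k := nk)
    ENNReal.summable]
  refine ENNReal.add_lt_top.mpr ⟨?_, ?_⟩
  · exact ENNReal.sum_lt_top.mpr fun i _ => (hfin _).lt_top
  · simpa only [hrw] using hnk

lemma rho_div_mono {z : ℕ → ℝ} {l1 l2 : ℝ} (hl1 : 0 < l1) (h12 : l1 ≤ l2) :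
    rho φ (fun i => z i / l2) ≤ rho φ (fun i => z i / l1) := by
  have hl2 : 0 < l2 := hl1.trans_le h12
  refine ENNReal.tsum_le_tsum fun n => ?_
  rw [ces_div z hl1 n, ces_div z hl2 n]
  exact phi_mono φ (div_nonneg (ces_nonneg z n) hl2.le)
    (div_le_div_of_nonneg_left (ces_nonneg z n) hl1 h12)

lemma exists_mem (hfin : FiniteValued φ) {z : ℕ → ℝ} (hz : z ∈ Aphi φ) :
    ∃ lam : ℝ, 0 < lam ∧ rho φ (fun i => z i / lam) ≤ 1 := by
  have hC : rho φ z < ⊤ := by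
    have := rho_k_lt_top φ hfin hz one_pos
    simpa only [one_mul] using this
  set C : ℝ≥0∞ := rho φ z with hCdef
  refine ⟨C.toReal + 1, by positivity, ?_⟩
  set lam : ℝ := C.toReal + 1 with hlam
  have hlpos : 0 < lam := by positivity
  have hl1 : 1 ≤ lam := by
    have : 0 ≤ C.toReal := ENNReal.toReal_nonneg
    linarith
  have hterm : ∀ n : ℕ, φ.toFun (cesaroMean (fun i => z i / lam) n) ≤
      ENNReal.ofReal (1 / lam) * φ.toFun (cesaroMean z n) := by
    intro n
    have h := φ.convex' (cesaroMean z n) 0 (1 / lam)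
      (by positivity) ((div_le_one hlpos).mpr hl1)
    rw [mul_zero, add_zero, φ.map_zero', mul_zero, add_zero] at h
    rw [ces_div z hlpos n]
    calc φ.toFun (cesaroMean z n / lam) = φ.toFun (1 / lam * cesaroMean z n) := by
          rw [one_div, inv_mul_eq_div]
      _ ≤ _ := h
  calc rho φ (fun i => z i / lam) ≤ ∑' n, ENNReal.ofReal (1 / lam) * φ.toFun (cesaroMean z n) :=
        ENNReal.tsum_le_tsum hterm
    _ = ENNReal.ofReal (1 / lam) * C := by rw [ENNReal.tsum_mul_left]; rfl
    _ ≤ 1 := by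
        rw [← ENNReal.ofReal_toReal hC.ne, ← ENNReal.ofReal_mul (by positivity)]
        refine ENNReal.ofReal_le_one.mpr ?_
        rw [one_div, inv_mul_eq_div, div_le_one hlpos]
        linarith

lemma upward {z : ℕ → ℝ} {l1 l2 : ℝ} (hl1 : 0 < l1) (h12 : l1 ≤ l2)
    (h : rho φ (fun i => z i / l1) ≤ 1) : rho φ (fun i => z i / l2) ≤ 1 :=
  (rho_div_mono φ hl1 h12).trans h

lemma mem_gt_norm (hfin : FiniteValued φ) {z : ℕ → ℝ} (hz : z ∈ Aphi φ) {lam : ℝ}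
    (h : luxNorm φ z < lam) : rho φ (fun i => z i / lam) ≤ 1 := by
  obtain ⟨l0, hl0, hl0'⟩ := exists_mem φ hfin hz
  have hne : Set.Nonempty {lam : ℝ | 0 < lam ∧ rho φ (fun i => z i / lam) ≤ 1} :=
    ⟨l0, hl0, hl0'⟩
  obtain ⟨b, hb, hblt⟩ := exists_lt_of_csInf_lt hne h
  exact upward φ hb.1 hblt.le hb.2

lemma strict_of_pos (hfin : FiniteValued φ)
    (hpos : ∀ u : ℝ, 0 < u → 0 < φ.toFun u)
    {x y : ℕ → ℝ} (hx : x ∈ Aphi φ) (hy : y ∈ Aphi φ) (hx0 : ∀ i, 0 ≤ x i)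
    (hxy : ∀ i, x i ≤ y i) (hne : x ≠ y) : luxNorm φ x < luxNorm φ y := by
  obtain ⟨i₀, hi₀⟩ := Function.ne_iff.mp hne
  have hxyi₀ : x i₀ < y i₀ := lt_of_le_of_ne (hxy i₀) hi₀
  have habs : ∀ i, |x i| ≤ |y i| := fun i => by
    rw [abs_of_nonneg (hx0 i), abs_of_nonneg ((hx0 i).trans (hxy i))]; exact hxy i
  have hsle : ∀ n, cesaroMean x n ≤ cesaroMean y n := by
    intro n
    unfold cesaroMean
    exact (div_le_div_iff_of_pos_right (by positivity)).mpr
      (Finset.sum_le_sum fun j _ => habs j)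
  set ma := cesaroMean x i₀ with hma
  set mb := cesaroMean y i₀ with hmbdef
  have hslt : ma < mb := by
    rw [hma, hmbdef]
    unfold cesaroMean
    rw [div_lt_div_iff_of_pos_right (by positivity)]
    refine Finset.sum_lt_sum (fun j _ => habs j) ⟨i₀, Finset.self_mem_range_succ i₀, ?_⟩
    rw [abs_of_nonneg (hx0 i₀), abs_of_nonneg ((hx0 i₀).trans (hxy i₀))]
    exact hxyi₀
  have hma0 : 0 ≤ ma := ces_nonneg x i₀
  have hmb0 : 0 < mb := hma0.trans_lt hslt
  -- the norm of y is positive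
  have hySne : Set.Nonempty {lam : ℝ | 0 < lam ∧ rho φ (fun i => y i / lam) ≤ 1} :=
    exists_mem φ hfin hy
  have hev : ∀ᶠ t : ℝ in atTop, 1 < φ.toFun t :=
    φ.tendsto_top'.eventually (eventually_gt_nhds ENNReal.one_lt_top)
  obtain ⟨M, hM⟩ := Filter.eventually_atTop.mp hev
  set M' : ℝ := max M 1 with hM'
  have hM'pos : (0:ℝ) < M' := lt_of_lt_of_le one_pos (le_max_right _ _)
  have hlow : ∀ l ∈ {lam : ℝ | 0 < lam ∧ rho φ (fun i => y i / lam) ≤ 1}, mb / M' ≤ l := by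
    rintro l ⟨hl, hρ⟩
    by_contra hcon
    push_neg at hcon
    have h1 : M' < mb / l := by
      have hlm : l * M' < mb := (lt_div_iff₀ hM'pos).mp hcon
      rw [lt_div_iff₀ hl]
      calc M' * l = l * M' := mul_comm _ _
        _ < mb := hlm
    have h2 : 1 < φ.toFun (mb / l) := hM _ (le_of_lt (lt_of_le_of_lt (le_max_left _ _) h1))
    have h3 : φ.toFun (mb / l) ≤ 1 := by
      calc φ.toFun (mb / l) = φ.toFun (cesaroMean (fun i => y i / l) i₀) := by
            rw [ces_div y hl]
        _ ≤ rho φ (fun i => y i / l) := ENNReal.le_tsum i₀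
        _ ≤ 1 := hρ
    exact absurd h3 (not_le.mpr h2)
  set lam := luxNorm φ y with hlamdef
  have hlampos : 0 < lam := by
    have := le_csInf hySne hlow
    have hmbM : 0 < mb / M' := by positivity
    exact lt_of_lt_of_le hmbM this
  -- finiteness of auxiliary modulars
  have hA : rho φ (fun i => (2 / lam) * x i) < ⊤ :=
    rho_k_lt_top φ hfin hx (by positivity)
  set A := rho φ (fun i => (2 / lam) * x i) with hAdef
  -- the gap δ
  set mc : ℝ := (ma + mb) / 2 with hmc
  have hac : ma < mc := by rw [hmc]; linarith
  have hcb : mc < mb := by rw [hmc]; linarith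
  have hmc0 : 0 < mc := hma0.trans_lt hac
  set δ : ℝ≥0∞ := φ.toFun (mc / lam) - φ.toFun (ma / lam) with hδdef
  have hδpos : 0 < δ := by
    rw [hδdef]
    refine tsub_pos_of_lt (phi_lt φ hfin hpos (div_nonneg hma0 hlampos.le) ?_)
    rw [div_lt_div_iff_of_pos_right hlampos]
    exact hac
  have hδtop : δ ≠ ⊤ := by
    rw [hδdef]
    exact (tsub_le_self.trans_lt (hfin (mc / lam)).lt_top).ne
  set B : ℝ≥0∞ := 1 - δ with hBdef
  have hB1 : B < 1 := ENNReal.sub_lt_self ENNReal.one_ne_top one_ne_zero hδpos.ne'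
  set ε : ℝ≥0∞ := 1 - B with hεdef
  have hεpos : 0 < ε := tsub_pos_of_lt hB1
  have hεtop : ε ≠ ⊤ := (tsub_le_self.trans_lt ENNReal.one_lt_top).ne
  set t : ℝ := min 1 (ε.toReal / (A.toReal + 1)) with htdef
  have ht0 : 0 < t :=
    lt_min one_pos (div_pos (ENNReal.toReal_pos hεpos.ne' hεtop) (by positivity))
  have ht1 : t ≤ 1 := min_le_left _ _
  have hkey : ENNReal.ofReal t * A + B ≤ 1 := by
    have h1 : ENNReal.ofReal t * A ≤ ε := by
      calc ENNReal.ofReal t * A = ENNReal.ofReal t * ENNReal.ofReal A.toReal := by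
            rw [ENNReal.ofReal_toReal hA.ne]
        _ = ENNReal.ofReal (t * A.toReal) := (ENNReal.ofReal_mul ht0.le).symm
        _ ≤ ENNReal.ofReal ε.toReal := by
            refine ENNReal.ofReal_le_ofReal ?_
            have h2 : t ≤ ε.toReal / (A.toReal + 1) := min_le_right _ _
            have h3 : (0:ℝ) ≤ A.toReal := ENNReal.toReal_nonneg
            have h4 : (0:ℝ) ≤ ε.toReal := ENNReal.toReal_nonneg
            calc t * A.toReal ≤ ε.toReal / (A.toReal + 1) * A.toReal := by
                  exact mul_le_mul_of_nonneg_right h2 h3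
              _ ≤ ε.toReal := by
                  rw [div_mul_eq_mul_div, div_le_iff₀ (by positivity)]
                  nlinarith
        _ = ε := ENNReal.ofReal_toReal hεtop
    calc ENNReal.ofReal t * A + B ≤ ε + B := add_le_add_left h1 B
      _ = 1 := by rw [hεdef]; exact tsub_add_cancel_of_le hB1.le
  -- the intermediate scale lam''
  set r : ℝ := min (1 + t / 2) (mb / mc) with hrdef
  have hr1 : 1 < r := lt_min (by linarith) ((one_lt_div hmc0).mpr hcb)
  set lam'' : ℝ := lam * r with hlam''def
  have hlam''pos : 0 < lam'' := by
    rw [hlam''def]; exact mul_pos hlampos (lt_trans one_pos hr1)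
  have hlam''gt : lam < lam'' := by
    rw [hlam''def]
    exact (lt_mul_iff_one_lt_right hlampos).mpr hr1
  have hlam''le : lam'' ≤ lam * (mb / mc) := by
    rw [hlam''def]
    exact mul_le_mul_of_nonneg_left (min_le_right _ _) hlampos.le
  have hlam''lt : lam'' < lam * (1 + t) := by
    rw [hlam''def]
    have h5 : r ≤ 1 + t / 2 := min_le_left _ _
    nlinarith
  have hrho_y : rho φ (fun i => y i / lam'') ≤ 1 := mem_gt_norm φ hfin hy hlam''gt
  -- gap at scale lam''
  set d : ℝ≥0∞ := φ.toFun (mb / lam'') - φ.toFun (ma / lam'') with hddef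
  have hab'' : φ.toFun (ma / lam'') ≤ φ.toFun (mb / lam'') :=
    phi_mono φ (div_nonneg hma0 hlam''pos.le)
      (by rw [div_le_div_iff_of_pos_right hlam''pos]; exact hslt.le)
  have hδd : δ ≤ d := by
    rw [hδdef, hddef]
    refine tsub_le_tsub ?_ ?_
    · refine phi_mono φ (div_nonneg hmc0.le hlampos.le) ?_
      rw [div_le_div_iff₀ hlampos hlam''pos]
      calc mc * lam'' ≤ mc * (lam * (mb / mc)) :=
            mul_le_mul_of_nonneg_left hlam''le hmc0.le
        _ = mb * lam := by field_simp
    · exact phi_mono φ (div_nonneg hma0 hlam''pos.le)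
        (div_le_div_of_nonneg_left hma0 hlampos hlam''gt.le)
  have hsum : rho φ (fun i => x i / lam'') + d ≤ rho φ (fun i => y i / lam'') := by
    have hXr : rho φ (fun i => x i / lam'') = ∑' n, φ.toFun (cesaroMean x n / lam'') := by
      unfold rho; exact tsum_congr fun n => by rw [ces_div x hlam''pos]
    have hYr : rho φ (fun i => y i / lam'') = ∑' n, φ.toFun (cesaroMean y n / lam'') := by
      unfold rho; exact tsum_congr fun n => by rw [ces_div y hlam''pos]
    have hX := ENNReal.tsum_eq_add_tsum_ite (f := fun n => φ.toFun (cesaroMean x n / lam'')) i₀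
    have hY := ENNReal.tsum_eq_add_tsum_ite (f := fun n => φ.toFun (cesaroMean y n / lam'')) i₀
    rw [hXr, hYr, hX, hY]
    have hcan : φ.toFun (ma / lam'') + d = φ.toFun (mb / lam'') := by
      rw [hddef]
      exact add_tsub_cancel_of_le hab''
    rw [add_right_comm]
    refine add_le_add ?_ (ENNReal.tsum_le_tsum fun n => ?_)
    · exact le_of_eq hcan
    · by_cases hn : n = i₀
      · simp [hn]
      · simp only [hn, if_false]
        exact phi_mono φ (div_nonneg (ces_nonneg x n) hlam''pos.le) (by
          rw [div_le_div_iff_of_pos_right hlam''pos]; exact hsle n)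
  have hBx : rho φ (fun i => x i / lam'') ≤ B := by
    have h6 : rho φ (fun i => x i / lam'') + δ ≤ 1 := by
      calc rho φ (fun i => x i / lam'') + δ ≤ rho φ (fun i => x i / lam'') + d := by
            gcongr
        _ ≤ rho φ (fun i => y i / lam'') := hsum
        _ ≤ 1 := hrho_y
    rw [hBdef]
    exact ENNReal.le_sub_of_add_le_right hδtop h6
  -- the target scale lam'
  set lam' : ℝ := lam'' / (1 + t) with hlam'def
  have hlam'pos : 0 < lam' := by rw [hlam'def]; positivity
  have hlam'lt : lam' < lam := by
    rw [hlam'def, div_lt_iff₀ (by linarith)]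
    exact hlam''lt
  have hfinal : rho φ (fun i => x i / lam') ≤ 1 := by
    have hterm : ∀ n, φ.toFun (cesaroMean x n / lam') ≤
        ENNReal.ofReal t * φ.toFun (2 * cesaroMean x n / lam'') +
        ENNReal.ofReal (1 - t) * φ.toFun (cesaroMean x n / lam'') := by
      intro n
      have harg : t * (2 * cesaroMean x n / lam'') + (1 - t) * (cesaroMean x n / lam'') =
          cesaroMean x n / lam' := by
        have h7 : lam'' ≠ 0 := hlam''pos.ne'
        have h8 : (1:ℝ) + t ≠ 0 := by linarith
        rw [hlam'def]
        field_simp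
        ring
      have h := φ.convex' (2 * cesaroMean x n / lam'') (cesaroMean x n / lam'') t ht0.le ht1
      rw [harg] at h
      exact h
    calc rho φ (fun i => x i / lam') = ∑' n, φ.toFun (cesaroMean x n / lam') := by
          unfold rho; exact tsum_congr fun n => by rw [ces_div x hlam'pos]
      _ ≤ ∑' n, (ENNReal.ofReal t * φ.toFun (2 * cesaroMean x n / lam'') +
          ENNReal.ofReal (1 - t) * φ.toFun (cesaroMean x n / lam'')) :=
          ENNReal.tsum_le_tsum hterm
      _ = ENNReal.ofReal t * (∑' n, φ.toFun (2 * cesaroMean x n / lam'')) +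
          ENNReal.ofReal (1 - t) * (∑' n, φ.toFun (cesaroMean x n / lam'')) := by
          rw [ENNReal.tsum_add, ENNReal.tsum_mul_left, ENNReal.tsum_mul_left]
      _ ≤ ENNReal.ofReal t * A + 1 * B := by
          refine add_le_add (mul_le_mul_right ?_ _) ?_
          · -- tail: ∑' φ(2σ/λ'') ≤ A
            rw [hAdef]
            unfold rho
            refine ENNReal.tsum_le_tsum fun n => ?_
            rw [ces_smul x (by positivity : (0:ℝ) ≤ 2 / lam)]
            refine phi_mono φ
              (div_nonneg (mul_nonneg (by norm_num) (ces_nonneg x n)) hlam''pos.le) ?_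
            rw [div_mul_eq_mul_div]
            exact div_le_div_of_nonneg_left
              (mul_nonneg (by norm_num) (ces_nonneg x n)) hlampos hlam''gt.le
          · calc ENNReal.ofReal (1 - t) * (∑' n, φ.toFun (cesaroMean x n / lam'')) ≤
                1 * (∑' n, φ.toFun (cesaroMean x n / lam'')) :=
                  mul_le_mul_left (ENNReal.ofReal_le_one.mpr (by linarith)) _
              _ ≤ 1 * B := by
                  rw [one_mul, one_mul]
                  calc (∑' n, φ.toFun (cesaroMean x n / lam'')) =
                      rho φ (fun i => x i / lam'') := by
                        unfold rho
                        exact tsum_congr fun n => by rw [ces_div x hlam''pos]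
                    _ ≤ B := hBx
      _ ≤ 1 := by rw [one_mul]; exact hkey
  calc luxNorm φ x ≤ lam' :=
        csInf_le ⟨0, fun b hb => hb.1.le⟩ ⟨hlam'pos, hfinal⟩
    _ < lam := hlam'lt

lemma not_strict (hfin : FiniteValued φ) {u : ℝ} (hu : 0 < u) (hu0 : φ.toFun u = 0)
    (hsm : ∀ x y : ℕ → ℝ, x ∈ Aphi φ → y ∈ Aphi φ → (∀ i, 0 ≤ x i) → (∀ i, x i ≤ y i) →
        x ≠ y → luxNorm φ x < luxNorm φ y) : False := by
  have hφ0 : ∀ t : ℝ, 0 ≤ t → t ≤ u → φ.toFun t = 0 := fun t h1 h2 =>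
    phi_zero_le φ hu0 h1 h2
  set x : ℕ → ℝ := fun i => if i = 0 then u else 0 with hxdef
  have hx0 : ∀ i, 0 ≤ x i := by
    intro i; rw [hxdef]; dsimp only; split_ifs <;> simp [hu.le]
  have hSx : ∀ m : ℕ, 1 ≤ m → ∑ i ∈ Finset.range m, |x i| = u := by
    intro m hm
    have h1 : ∀ i ∈ Finset.range m, |x i| = if i = 0 then u else 0 := by
      intro i _
      rw [hxdef]; dsimp only; split_ifs <;> simp [abs_of_nonneg hu.le]
    rw [Finset.sum_congr rfl h1, Finset.sum_ite_eq' (Finset.range m) 0 (fun _ => u)]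
    simp [Finset.mem_range, hm]
    omega
  have hcesx : ∀ n : ℕ, cesaroMean x n = u / ((n : ℝ) + 1) := by
    intro n; unfold cesaroMean; rw [hSx (n + 1) (by omega)]
  have hcesx_le : ∀ n, cesaroMean x n ≤ u := by
    intro n
    rw [hcesx n]
    refine div_le_self hu.le ?_
    have := Nat.cast_nonneg (α := ℝ) n
    linarith
  have hrx : rho φ x = 0 := by
    have : (∑' n : ℕ, φ.toFun (cesaroMean x n)) = ∑' _ : ℕ, (0 : ℝ≥0∞) :=
      tsum_congr fun n => hφ0 _ (ces_nonneg x n) (hcesx_le n)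
    rw [rho]
    rw [this, tsum_zero]
  have hxA : x ∈ Aphi φ := by
    constructor
    · refine ⟨1, one_pos, ?_⟩
      have he : (fun i => (1:ℝ) * x i) = x := funext fun i => one_mul _
      rw [he, hrx]
      exact ENNReal.zero_lt_top
    · intro k hk
      refine ⟨⌈k⌉₊, ?_⟩
      have hterm : ∀ n : ℕ, φ.toFun ((k / ((⌈k⌉₊ + n + 1 : ℕ) : ℝ)) *
          ∑ i ∈ Finset.range (⌈k⌉₊ + n + 1), |x i|) = 0 := by
        intro n
        rw [hSx _ (by omega)]
        have hmpos : (0:ℝ) < ((⌈k⌉₊ + n + 1 : ℕ) : ℝ) := by positivity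
        refine hφ0 _ (mul_nonneg (div_nonneg hk.le hmpos.le) hu.le) ?_
        have hkm : k ≤ ((⌈k⌉₊ + n + 1 : ℕ) : ℝ) := by
          have h2 := Nat.le_ceil k
          have h3 : ((⌈k⌉₊ : ℕ) : ℝ) ≤ ((⌈k⌉₊ + n + 1 : ℕ) : ℝ) :=
            Nat.cast_le.mpr (by omega)
          linarith
        have h4 : k / ((⌈k⌉₊ + n + 1 : ℕ) : ℝ) ≤ 1 := by
          rw [div_le_one hmpos]; exact hkm
        calc k / ((⌈k⌉₊ + n + 1 : ℕ) : ℝ) * u ≤ 1 * u :=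
              mul_le_mul_of_nonneg_right h4 hu.le
          _ = u := one_mul u
      exact Eq.trans_lt ((tsum_congr hterm).trans tsum_zero) ENNReal.zero_lt_top
  have hbddx : BddBelow {lam : ℝ | 0 < lam ∧ rho φ (fun i => x i / lam) ≤ 1} :=
    ⟨0, fun b hb => hb.1.le⟩
  have h1Sx : (1:ℝ) ∈ {lam : ℝ | 0 < lam ∧ rho φ (fun i => x i / lam) ≤ 1} := by
    refine ⟨one_pos, ?_⟩
    have he : (fun i => x i / 1) = x := funext fun i => div_one _
    rw [he, hrx]
    exact zero_le_one
  set lam0 := luxNorm φ x with hlam0def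
  have hlam0le1 : lam0 ≤ 1 := csInf_le hbddx h1Sx
  have hev : ∀ᶠ t : ℝ in atTop, 1 < φ.toFun t :=
    φ.tendsto_top'.eventually (eventually_gt_nhds ENNReal.one_lt_top)
  obtain ⟨M, hM⟩ := Filter.eventually_atTop.mp hev
  set M' : ℝ := max M 1 with hM'
  have hM'pos : (0:ℝ) < M' := lt_of_lt_of_le one_pos (le_max_right _ _)
  have hlam0pos : 0 < lam0 := by
    have hlow : ∀ l ∈ {lam : ℝ | 0 < lam ∧ rho φ (fun i => x i / lam) ≤ 1},
        u / M' ≤ l := by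
      rintro l ⟨hl, hρ⟩
      by_contra hcon
      push_neg at hcon
      have h1 : M' < u / l := by
        have hlm : l * M' < u := (lt_div_iff₀ hM'pos).mp hcon
        rw [lt_div_iff₀ hl]
        calc M' * l = l * M' := mul_comm _ _
          _ < u := hlm
      have h2 : 1 < φ.toFun (u / l) := hM _ (le_of_lt (lt_of_le_of_lt (le_max_left _ _) h1))
      have h3 : φ.toFun (u / l) ≤ 1 := by
        calc φ.toFun (u / l) = φ.toFun (cesaroMean (fun i => x i / l) 0) := by
              rw [ces_div x hl, hcesx 0]
              norm_num
          _ ≤ rho φ (fun i => x i / l) := ENNReal.le_tsum 0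
          _ ≤ 1 := hρ
      exact absurd h3 (not_le.mpr h2)
    have := le_csInf ⟨1, h1Sx⟩ hlow
    have hupos : 0 < u / M' := by positivity
    exact lt_of_lt_of_le hupos this
  set N : ℕ := max 2 ⌈2 / lam0⌉₊ with hNdef
  have hN2 : 2 ≤ N := le_max_left _ _
  have hN0 : N ≠ 0 := by omega
  have hNc : 2 / lam0 ≤ (N : ℝ) := by
    refine (Nat.le_ceil _).trans ?_
    exact_mod_cast le_max_right 2 ⌈2 / lam0⌉₊
  set y : ℕ → ℝ := fun i => if i = 0 then u else if i = N then u else 0 with hydef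
  have hy0 : ∀ i, 0 ≤ y i := by
    intro i; rw [hydef]; dsimp only; split_ifs <;> simp [hu.le]
  have hxy : ∀ i, x i ≤ y i := by
    intro i; rw [hxdef, hydef]; dsimp only; split_ifs <;> simp [hu.le]
  have hne : x ≠ y := by
    intro h
    have := congrFun h N
    rw [hxdef, hydef] at this
    dsimp only at this
    rw [if_neg hN0, if_neg hN0, if_pos rfl] at this
    exact hu.ne' this.symm
  have hSy_le : ∀ m : ℕ, ∑ i ∈ Finset.range m, |y i| ≤ 2 * u := by
    intro m
    have hpt : ∀ i, |y i| ≤ (if i = 0 then u else 0) + (if i = N then u else 0) := by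
      intro i
      rw [hydef]; dsimp only
      split_ifs <;> simp [abs_of_nonneg hu.le, hu.le] <;> linarith
    calc ∑ i ∈ Finset.range m, |y i|
        ≤ ∑ i ∈ Finset.range m, ((if i = 0 then u else 0) + (if i = N then u else 0)) :=
          Finset.sum_le_sum fun i _ => hpt i
      _ = (∑ i ∈ Finset.range m, if i = 0 then u else 0) +
          ∑ i ∈ Finset.range m, if i = N then u else 0 := Finset.sum_add_distrib
      _ ≤ u + u := by
          rw [Finset.sum_ite_eq' (Finset.range m) 0 (fun _ => u),
            Finset.sum_ite_eq' (Finset.range m) N (fun _ => u)]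
          refine add_le_add ?_ ?_ <;> split_ifs <;> simp [hu.le]
      _ = 2 * u := by ring
  have hSy_eqx : ∀ m : ℕ, m ≤ N → ∑ i ∈ Finset.range m, |y i| =
      ∑ i ∈ Finset.range m, |x i| := by
    intro m hmN
    refine Finset.sum_congr rfl fun i hi => ?_
    have hiN : i ≠ N := by
      have := Finset.mem_range.mp hi
      omega
    rw [hxdef, hydef]
    dsimp only
    split_ifs with h1 h2 <;> first | rfl | exact absurd h2 hiN
  have hcesy_lt : ∀ n, n < N → cesaroMean y n = cesaroMean x n := by
    intro n hn
    unfold cesaroMean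
    rw [hSy_eqx (n + 1) (by omega)]
  have hcesy_ge : ∀ n : ℕ, cesaroMean y n ≤ 2 * u / ((n:ℝ) + 1) := by
    intro n
    unfold cesaroMean
    exact (div_le_div_iff_of_pos_right (by positivity)).mpr (hSy_le (n + 1))
  have hcesy_le_u : ∀ n, cesaroMean y n ≤ u := by
    intro n
    by_cases h : n < N
    · rw [hcesy_lt n h]; exact hcesx_le n
    · refine (hcesy_ge n).trans ?_
      rw [div_le_iff₀ (by positivity)]
      have h2 : (2:ℕ) ≤ n := hN2.trans (not_lt.mp h)
      have h3 : (2:ℝ) ≤ (n:ℝ) := by exact_mod_cast h2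
      nlinarith
  have hry : rho φ y = 0 := by
    have : (∑' n : ℕ, φ.toFun (cesaroMean y n)) = ∑' _ : ℕ, (0 : ℝ≥0∞) :=
      tsum_congr fun n => hφ0 _ (ces_nonneg y n) (hcesy_le_u n)
    rw [rho]
    rw [this, tsum_zero]
  have hyA : y ∈ Aphi φ := by
    constructor
    · refine ⟨1, one_pos, ?_⟩
      have he : (fun i => (1:ℝ) * y i) = y := funext fun i => one_mul _
      rw [he, hry]
      exact ENNReal.zero_lt_top
    · intro k hk
      refine ⟨⌈2 * k⌉₊, ?_⟩
      have hterm : ∀ n : ℕ, φ.toFun ((k / ((⌈2 * k⌉₊ + n + 1 : ℕ) : ℝ)) *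
          ∑ i ∈ Finset.range (⌈2 * k⌉₊ + n + 1), |y i|) = 0 := by
        intro n
        set m : ℕ := ⌈2 * k⌉₊ + n + 1 with hmdef
        have hmpos : (0:ℝ) < (m : ℝ) := by positivity
        have hS0 : (0:ℝ) ≤ ∑ i ∈ Finset.range m, |y i| :=
          Finset.sum_nonneg fun i _ => abs_nonneg _
        refine hφ0 _ (mul_nonneg (div_nonneg hk.le hmpos.le) hS0) ?_
        have hkm : 2 * k ≤ (m : ℝ) := by
          have h2 := Nat.le_ceil (2 * k)
          have h3 : ((⌈2 * k⌉₊ : ℕ) : ℝ) ≤ (m : ℝ) :=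
            Nat.cast_le.mpr (by omega)
          linarith
        calc k / (m:ℝ) * ∑ i ∈ Finset.range m, |y i| ≤ k / (m:ℝ) * (2 * u) :=
              mul_le_mul_of_nonneg_left (hSy_le m) (div_nonneg hk.le hmpos.le)
          _ ≤ u := by
              rw [div_mul_eq_mul_div, div_le_iff₀ hmpos]
              nlinarith
      exact Eq.trans_lt ((tsum_congr hterm).trans tsum_zero) ENNReal.zero_lt_top
  have hmain : ∀ lam : ℝ, lam0 < lam → rho φ (fun i => y i / lam) ≤ 1 := by
    intro lam hlam
    have hlampos : 0 < lam := hlam0pos.trans hlam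
    have hx1 : rho φ (fun i => x i / lam) ≤ 1 := mem_gt_norm φ hfin hxA hlam
    refine le_trans (ENNReal.tsum_le_tsum fun n => ?_) hx1
    rw [ces_div x hlampos, ces_div y hlampos]
    by_cases h : n < N
    · rw [hcesy_lt n h]
    · have hnN : (N:ℝ) ≤ (n:ℝ) := by exact_mod_cast not_lt.mp h
      have harg0 : cesaroMean y n / lam ≤ u := by
        have hc := hcesy_ge n
        have step1 : cesaroMean y n / lam ≤ (2 * u / ((n:ℝ) + 1)) / lam :=
          (div_le_div_iff_of_pos_right hlampos).mpr hc
        refine step1.trans ?_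
        rw [div_div, div_le_iff₀ (by positivity)]
        have k1 : (2 / lam0) * lam0 ≤ (n:ℝ) * lam :=
          mul_le_mul (hNc.trans hnN) hlam.le hlam0pos.le (Nat.cast_nonneg n)
        have k2 : (2 / lam0) * lam0 = 2 := div_mul_cancel₀ 2 hlam0pos.ne'
        have k3 : (n:ℝ) * lam ≤ ((n:ℝ) + 1) * lam := by nlinarith
        nlinarith
      rw [hφ0 _ (div_nonneg (ces_nonneg y n) hlampos.le) harg0]
      exact zero_le
  have hyle : luxNorm φ y ≤ lam0 := by
    refine le_of_forall_gt_imp_ge_of_dense fun a ha => ?_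
    exact csInf_le ⟨0, fun b hb => hb.1.le⟩ ⟨hlam0pos.trans ha, hmain a ha⟩
  have hlt := hsm x y hxA hyA hx0 hxy hne
  rw [← hlam0def] at hlt
  exact absurd (hlt.trans_le hyle) (lt_irrefl _)

end SMAux

/-- `A_φ` is strictly monotone iff `φ(u) > 0` for all `u > 0`. -/
theorem stmt_16 (φ : OrliczFunction) (hfin : FiniteValued φ) (htail : TailFinite φ) :
    (∀ x y : ℕ → ℝ, x ∈ Aphi φ → y ∈ Aphi φ → (∀ i, 0 ≤ x i) → (∀ i, x i ≤ y i) →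
        x ≠ y → luxNorm φ x < luxNorm φ y) ↔
      ∀ u : ℝ, 0 < u → 0 < φ.toFun u := by
  constructor
  · intro hsm u hu
    by_contra h
    have hu0 : φ.toFun u = 0 := by
      rcases eq_or_ne (φ.toFun u) 0 with h0 | h0
      · exact h0
      · exact absurd (pos_iff_ne_zero.mpr h0) h
    exact SMAux.not_strict φ hfin hu hu0 hsm
  · intro hpos x y hx hy hx0 hxy hne
    exact SMAux.strict_of_pos φ hfin hpos hx hy hx0 hxy hne
end
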